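/- Let λ > 3 and let (w_k)_{k ≥ 1} be a sequence of real numbers with |w₁| = 1/2 such that for every k ≥ 1 there exist ε_k ∈ {−1, +1} and δ_k ∈ {0, 1} with w_{k+1} = ε_k·λ·w_k + δ_k. Then |w_k| > 1/2 for all k ≥ 2. -/

import Mathlib

/-- Let `λ > 3` and let `(w_k)` be a sequence of reals with `|w₁| = 1/2` such that for every
`k ≥ 1` there are `ε_k ∈ {−1, +1}` and `δ_k ∈ {0, 1}` with `w_{k+1} = ε_k·λ·w_k + δ_k`.
Then `|w_k| > 1/2` for all `k ≥ 2`. -/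
theorem coefficient_escape_lambda_gt_three (lam : ℝ) (hlam : 3 < lam)
    (w : ℕ → ℝ) (hw1 : |w 1| = 1 / 2)
    (hrec : ∀ k : ℕ, 1 ≤ k → ∃ eps ∈ ({-1, 1} : Set ℝ), ∃ delta ∈ ({0, 1} : Set ℝ),
      w (k + 1) = eps * lam * w k + delta) :
    ∀ k : ℕ, 2 ≤ k → 1 / 2 < |w k| := by
  have key : ∀ k : ℕ, 1 ≤ k → 1 / 2 ≤ |w k| → 1 / 2 < |w (k + 1)| := by
    intro k hk hwk
    obtain ⟨eps, heps, delta, hdelta, hrec⟩ := hrec k hk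
    simp only [Set.mem_insert_iff, Set.mem_singleton_iff] at heps hdelta
    have heps1 : |eps| = 1 := by rcases heps with h | h <;> simp [h]
    have hd0 : 0 ≤ delta := by rcases hdelta with h | h <;> simp [h]
    have hd1 : delta ≤ 1 := by rcases hdelta with h | h <;> norm_num [h]
    have h1 : |eps * lam * w k| = lam * |w k| := by
      rw [abs_mul, abs_mul, heps1, abs_of_pos (by linarith : (0:ℝ) < lam)]
      ring
    have h2 : lam * |w k| - |delta| ≤ |w (k + 1)| := by
      rw [hrec]
      calc lam * |w k| - |delta| = |eps * lam * w k| - |delta| := by rw [h1]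
        _ ≤ |eps * lam * w k + delta| := by
            have := abs_add_le (eps * lam * w k + delta) (-delta)
            simp only [add_neg_cancel_right, abs_neg] at this
            linarith [abs_neg delta]
    have hd : |delta| ≤ 1 := by rw [abs_of_nonneg hd0]; exact hd1
    nlinarith
  intro k hk
  induction k with
  | zero => omega
  | succ n ih =>
    rcases Nat.lt_or_ge n 2 with h | h
    · interval_cases n
      · omega
      · exact key 1 le_rfl hw1.ge
    · exact key n (by omega) (ih (by omega)).le
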